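/- Let u be a C^∞ function on the unit circle and write u = h + H on the circle, where h is holomorphic on the unit disc 𝔻, H is holomorphic on ℂ ∖ 𝔻̄ and vanishes at infinity, and both extend C^∞ smoothly to the circle from their respective sides (the h + H decomposition, with h the Cauchy transform of u). Then the solution U of the classical Dirichlet problem for harmonic functions on 𝔻 with boundary datum u is given by U(z) = h(z) + H(1/z̄) for z ∈ 𝔻, where H(1/z̄) is interpreted at z = 0 as the (removable-singularity) limit 0. -/

import Mathlib

open Complex MeasureTheory Metric Set Filter
open scoped ENNReal NNReal Topology Real

noncomputable section

/-- The Laplacian of a function `f : ℂ → ℂ` (as a function of two real variables). -/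
def laplacianC (f : ℂ → ℂ) (z : ℂ) : ℂ :=
  fderiv ℝ (fun w => fderiv ℝ f w 1) z 1 + fderiv ℝ (fun w => fderiv ℝ f w I) z I

/-- `f` is harmonic on the open set `S`. -/
def HarmonicOnC (f : ℂ → ℂ) (S : Set ℂ) : Prop :=
  ContDiffOn ℝ 2 f S ∧ ∀ z ∈ S, laplacianC f z = 0

/-- `f` belongs to `C^∞(S)`: it is the restriction to `S` of a `C^∞` function on `ℂ`. -/
def SmoothUpTo (f : ℂ → ℂ) (S : Set ℂ) : Prop :=
  ∃ g : ℂ → ℂ, ContDiff ℝ (⊤ : ℕ∞) g ∧ EqOn f g S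







open Asymptotics

lemma hasDerivAt_conj_conj {f : ℂ → ℂ} {d z : ℂ} (hd : HasDerivAt f d ((starRingEnd ℂ) z)) :
    HasDerivAt (fun w => (starRingEnd ℂ) (f ((starRingEnd ℂ) w))) ((starRingEnd ℂ) d) z := by
  have hcomp := (hasDerivAt_iff_isLittleO.1 hd).comp_tendsto
    ((Complex.continuous_conj.tendsto z) : Tendsto (starRingEnd ℂ) (𝓝 z) (𝓝 ((starRingEnd ℂ) z)))
  rw [hasDerivAt_iff_isLittleO]
  simp only [smul_eq_mul] at hcomp ⊢
  simp only [Function.comp_def] at hcomp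
  have e1 : (fun w => (starRingEnd ℂ) (f ((starRingEnd ℂ) w)) - (starRingEnd ℂ) (f ((starRingEnd ℂ) z)) - (w - z) * (starRingEnd ℂ) d)
      = fun w => (starRingEnd ℂ) (f ((starRingEnd ℂ) w) - f ((starRingEnd ℂ) z) - ((starRingEnd ℂ) w - (starRingEnd ℂ) z) * d) := by
    funext w; simp [map_sub, map_mul]
  rw [e1, ← isLittleO_norm_left, ← isLittleO_norm_right]
  have e2 : (fun w => ‖(starRingEnd ℂ) (f ((starRingEnd ℂ) w) - f ((starRingEnd ℂ) z) - ((starRingEnd ℂ) w - (starRingEnd ℂ) z) * d)‖)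
      = fun w => ‖f ((starRingEnd ℂ) w) - f ((starRingEnd ℂ) z) - ((starRingEnd ℂ) w - (starRingEnd ℂ) z) * d‖ := by
    funext w; exact RCLike.norm_conj _
  have e3 : (fun w : ℂ => ‖w - z‖) = fun w => ‖(starRingEnd ℂ) w - (starRingEnd ℂ) z‖ := by
    funext w; rw [← map_sub]; exact (RCLike.norm_conj _).symm
  rw [e2, e3]
  exact hcomp.norm_left.norm_right

lemma fderiv_real_holo {f : ℂ → ℂ} {z : ℂ} (hf : DifferentiableAt ℂ f z) (v : ℂ) :
    fderiv ℝ f z v = v * deriv f z := by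
  rw [(hf.hasFDerivAt.restrictScalars ℝ).fderiv]
  show fderiv ℂ f z v = v * deriv f z
  have : v = v • (1 : ℂ) := by simp
  conv_lhs => rw [this, _root_.map_smul]
  rw [smul_eq_mul]
  rfl

-- the two key second-derivative computations for a holomorphic f on an open set
lemma laplacianC_holo_zero {f : ℂ → ℂ} {s : Set ℂ} (hs : IsOpen s)
    (hf : DifferentiableOn ℂ f s) : ∀ z ∈ s, laplacianC f z = 0 := by
  intro z hz
  have han : AnalyticOnNhd ℂ f s := hf.analyticOnNhd hs
  have hd1 : AnalyticOnNhd ℂ (deriv f) s := han.deriv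
  have hfz : ∀ w ∈ s, DifferentiableAt ℂ f w := fun w hw => (han w hw).differentiableAt
  have hdz : DifferentiableAt ℂ (deriv f) z := (hd1 z hz).differentiableAt
  have hdzR : DifferentiableAt ℝ (deriv f) z := hdz.restrictScalars ℝ
  have e1 : (fun w => fderiv ℝ f w 1) =ᶠ[𝓝 z] fun w => deriv f w := by
    filter_upwards [hs.mem_nhds hz] with w hw
    rw [fderiv_real_holo (hfz w hw) 1, one_mul]
  have e2 : (fun w => fderiv ℝ f w I) =ᶠ[𝓝 z] fun w => I * deriv f w := by
    filter_upwards [hs.mem_nhds hz] with w hw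
    exact fderiv_real_holo (hfz w hw) I
  have t1 : fderiv ℝ (fun w => fderiv ℝ f w 1) z 1 = deriv (deriv f) z := by
    rw [e1.fderiv_eq, fderiv_real_holo hdz 1, one_mul]
  have t2 : fderiv ℝ (fun w => fderiv ℝ f w I) z I = I * (I * deriv (deriv f) z) := by
    rw [e2.fderiv_eq, fderiv_const_mul hdzR I]
    simp [fderiv_real_holo hdz I]
  rw [laplacianC, t1, t2]
  rw [← mul_assoc, I_mul_I]
  ring

lemma laplacianC_conj_holo_zero {f : ℂ → ℂ} {s : Set ℂ} (hs : IsOpen s)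
    (hf : DifferentiableOn ℂ f s) :
    ∀ z ∈ s, laplacianC (fun w => (starRingEnd ℂ) (f w)) z = 0 := by
  intro z hz
  have han : AnalyticOnNhd ℂ f s := hf.analyticOnNhd hs
  have hd1 : AnalyticOnNhd ℂ (deriv f) s := han.deriv
  have hfz : ∀ w ∈ s, DifferentiableAt ℂ f w := fun w hw => (han w hw).differentiableAt
  have hdz : DifferentiableAt ℂ (deriv f) z := (hd1 z hz).differentiableAt
  have hdzR : DifferentiableAt ℝ (deriv f) z := hdz.restrictScalars ℝ
  have hconj : ∀ (g : ℂ → ℂ) (w : ℂ), DifferentiableAt ℝ g w →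
      fderiv ℝ (fun x => (starRingEnd ℂ) (g x)) w
        = (Complex.conjCLE.toContinuousLinearMap).comp (fderiv ℝ g w) := by
    intro g w hg
    exact (Complex.conjCLE.toContinuousLinearMap.hasFDerivAt.comp w hg.hasFDerivAt).fderiv
  have e1 : (fun w => fderiv ℝ (fun x => (starRingEnd ℂ) (f x)) w 1)
      =ᶠ[𝓝 z] fun w => (starRingEnd ℂ) (deriv f w) := by
    filter_upwards [hs.mem_nhds hz] with w hw
    rw [hconj f w ((hfz w hw).restrictScalars ℝ)]
    simp [fderiv_real_holo (hfz w hw) 1]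
  have e2 : (fun w => fderiv ℝ (fun x => (starRingEnd ℂ) (f x)) w I)
      =ᶠ[𝓝 z] fun w => (starRingEnd ℂ) (I * deriv f w) := by
    filter_upwards [hs.mem_nhds hz] with w hw
    rw [hconj f w ((hfz w hw).restrictScalars ℝ)]
    simp [fderiv_real_holo (hfz w hw) I]
  have t1 : fderiv ℝ (fun w => fderiv ℝ (fun x => (starRingEnd ℂ) (f x)) w 1) z 1
      = (starRingEnd ℂ) (deriv (deriv f) z) := by
    rw [e1.fderiv_eq, hconj (deriv f) z hdzR]
    simp [fderiv_real_holo hdz 1]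
  have t2 : fderiv ℝ (fun w => fderiv ℝ (fun x => (starRingEnd ℂ) (f x)) w I) z I
      = (starRingEnd ℂ) (I * (I * deriv (deriv f) z)) := by
    have : (fun w => (starRingEnd ℂ) (I * deriv f w))
        = fun w => (starRingEnd ℂ) ((fun x => I * deriv f x) w) := rfl
    rw [e2.fderiv_eq, this, hconj _ z (hdzR.const_mul I)]
    simp only [ContinuousLinearMap.coe_comp', Function.comp_apply,
      ContinuousLinearEquiv.coe_coe, Complex.conjCLE_apply]
    rw [fderiv_const_mul hdzR I]
    simp [fderiv_real_holo hdz I]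
  rw [laplacianC, t1, t2]
  rw [← mul_assoc, I_mul_I, ← map_add]
  norm_num

lemma diff_fderiv_apply {F : Type*} [NormedAddCommGroup F] [NormedSpace ℝ F]
    {f : ℂ → F} {s : Set ℂ} {z : ℂ} (hs : IsOpen s) (hz : z ∈ s)
    (hf : ContDiffOn ℝ 2 f s) (v : ℂ) :
    DifferentiableAt ℝ (fun w => fderiv ℝ f w v) z := by
  have h1 : ContDiffOn ℝ 1 (fderiv ℝ f) s := hf.fderiv_of_isOpen hs (by norm_num)
  have h2 : DifferentiableAt ℝ (fderiv ℝ f) z :=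
    (h1.differentiableOn one_ne_zero).differentiableAt (hs.mem_nhds hz)
  exact (ContinuousLinearMap.apply ℝ F v).differentiableAt.comp z h2

lemma laplacianC_add' {f g : ℂ → ℂ} {s : Set ℂ} {z : ℂ} (hs : IsOpen s) (hz : z ∈ s)
    (hf : ContDiffOn ℝ 2 f s) (hg : ContDiffOn ℝ 2 g s) :
    laplacianC (fun w => f w + g w) z = laplacianC f z + laplacianC g z := by
  have hfd : ∀ w ∈ s, DifferentiableAt ℝ f w := fun w hw =>
    ((hf.differentiableOn (by norm_num)).differentiableAt (hs.mem_nhds hw))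
  have hgd : ∀ w ∈ s, DifferentiableAt ℝ g w := fun w hw =>
    ((hg.differentiableOn (by norm_num)).differentiableAt (hs.mem_nhds hw))
  have key : ∀ v : ℂ, fderiv ℝ (fun w => fderiv ℝ (fun x => f x + g x) w v) z v
      = fderiv ℝ (fun w => fderiv ℝ f w v) z v + fderiv ℝ (fun w => fderiv ℝ g w v) z v := by
    intro v
    have e : (fun w => fderiv ℝ (fun x => f x + g x) w v)
        =ᶠ[𝓝 z] fun w => fderiv ℝ f w v + fderiv ℝ g w v := by
      filter_upwards [hs.mem_nhds hz] with w hw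
      rw [fderiv_fun_add (hfd w hw) (hgd w hw)]; rfl
    rw [e.fderiv_eq, fderiv_fun_add (diff_fderiv_apply hs hz hf v) (diff_fderiv_apply hs hz hg v)]
    rfl
  rw [laplacianC, laplacianC, laplacianC, key 1, key I]; ring

lemma laplacianC_sub' {f g : ℂ → ℂ} {s : Set ℂ} {z : ℂ} (hs : IsOpen s) (hz : z ∈ s)
    (hf : ContDiffOn ℝ 2 f s) (hg : ContDiffOn ℝ 2 g s) :
    laplacianC (fun w => f w - g w) z = laplacianC f z - laplacianC g z := by
  have hfd : ∀ w ∈ s, DifferentiableAt ℝ f w := fun w hw =>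
    ((hf.differentiableOn (by norm_num)).differentiableAt (hs.mem_nhds hw))
  have hgd : ∀ w ∈ s, DifferentiableAt ℝ g w := fun w hw =>
    ((hg.differentiableOn (by norm_num)).differentiableAt (hs.mem_nhds hw))
  have key : ∀ v : ℂ, fderiv ℝ (fun w => fderiv ℝ (fun x => f x - g x) w v) z v
      = fderiv ℝ (fun w => fderiv ℝ f w v) z v - fderiv ℝ (fun w => fderiv ℝ g w v) z v := by
    intro v
    have e : (fun w => fderiv ℝ (fun x => f x - g x) w v)
        =ᶠ[𝓝 z] fun w => fderiv ℝ f w v - fderiv ℝ g w v := by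
      filter_upwards [hs.mem_nhds hz] with w hw
      rw [fderiv_fun_sub (hfd w hw) (hgd w hw)]; rfl
    rw [e.fderiv_eq, fderiv_fun_sub (diff_fderiv_apply hs hz hf v) (diff_fderiv_apply hs hz hg v)]
    rfl
  rw [laplacianC, laplacianC, laplacianC, key 1, key I]; ring

lemma second_deriv_nonpos_at_localmax {g g' : ℝ → ℝ} {a : ℝ}
    (hg : ∀ᶠ t in 𝓝 (0:ℝ), HasDerivAt g (g' t) t)
    (hg' : HasDerivAt g' a 0) (hmax : IsLocalMax g 0) : a ≤ 0 := by
  by_contra hpos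
  push_neg at hpos
  have h0 : g' 0 = 0 := by
    have h1 := hmax.deriv_eq_zero
    rwa [hg.self_of_nhds.deriv] at h1
  have hs : ∀ᶠ t in 𝓝[>] (0:ℝ), 0 < g' t := by
    have h1 := hasDerivAt_iff_tendsto_slope.1 hg'
    have h2 : ∀ᶠ t in 𝓝[≠] (0:ℝ), 0 < slope g' 0 t :=
      h1.eventually (eventually_gt_nhds hpos)
    have h3 : ∀ᶠ t in 𝓝[>] (0:ℝ), 0 < slope g' 0 t :=
      h2.filter_mono (nhdsWithin_mono _ (fun t ht => ne_of_gt ht))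
    filter_upwards [h3, self_mem_nhdsWithin] with t ht ht0
    have : slope g' 0 t = g' t / t := by
      rw [slope_def_field]; rw [h0]; ring_nf
    rw [this] at ht
    have := mul_pos ht ht0
    rwa [div_mul_cancel₀] at this
    exact ne_of_gt ht0
  -- extract δ
  rw [eventually_nhdsWithin_iff] at hs
  rcases Metric.eventually_nhds_iff.1 (hs.and (hg.and hmax)) with ⟨δ, hδ, hδp⟩
  set c := δ / 2 with hc
  have hc0 : 0 < c := by positivity
  have hcin : ∀ t ∈ Icc (0:ℝ) c, dist t 0 < δ := by
    intro t ht
    rw [Real.dist_eq, sub_zero, _root_.abs_of_nonneg ht.1]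
    calc t ≤ c := ht.2
    _ < δ := by rw [hc]; linarith
  have hmono : StrictMonoOn g (Icc (0:ℝ) c) := by
    apply strictMonoOn_of_deriv_pos (convex_Icc _ _)
    · intro t ht
      exact ((hδp (hcin t ht)).2.1).differentiableAt.continuousAt.continuousWithinAt
    · intro t ht
      rw [interior_Icc] at ht
      have h4 := hδp (hcin t ⟨le_of_lt ht.1, le_of_lt ht.2⟩)
      rw [h4.2.1.deriv]
      exact h4.1 ht.1
  have h5 : g 0 < g c := hmono (left_mem_Icc.2 (le_of_lt hc0)) (right_mem_Icc.2 (le_of_lt hc0)) hc0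
  have h6 : g c ≤ g 0 := (hδp (hcin c (right_mem_Icc.2 (le_of_lt hc0)))).2.2
  linarith

lemma real_max_principle {φ : ℂ → ℝ}
    (hc : ContinuousOn φ (closedBall (0:ℂ) 1))
    (h2 : ContDiffOn ℝ 2 φ (ball (0:ℂ) 1))
    (hlap : ∀ z ∈ ball (0:ℂ) 1,
      fderiv ℝ (fun w => fderiv ℝ φ w 1) z 1 + fderiv ℝ (fun w => fderiv ℝ φ w I) z I = 0)
    (hb : ∀ z ∈ sphere (0:ℂ) 1, φ z = 0) :
    ∀ z ∈ closedBall (0:ℂ) 1, φ z ≤ 0 := by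
  -- the auxiliary function ν w = ‖w‖²
  set ν : ℂ → ℝ := fun w => w.re * w.re + w.im * w.im with hν
  have hνf : ∀ w : ℂ, HasFDerivAt ν
      ((w.re • Complex.reCLM + w.re • Complex.reCLM)
        + (w.im • Complex.imCLM + w.im • Complex.imCLM)) w := by
    intro w
    exact (Complex.reCLM.hasFDerivAt.mul Complex.reCLM.hasFDerivAt).add
      (Complex.imCLM.hasFDerivAt.mul Complex.imCLM.hasFDerivAt)
  have hνcd : ContDiff ℝ 2 ν :=
    (Complex.reCLM.contDiff.mul Complex.reCLM.contDiff).add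
      (Complex.imCLM.contDiff.mul Complex.imCLM.contDiff)
  have hν1 : (fun w => fderiv ℝ ν w (1:ℂ)) = fun w => 2 * w.re := by
    funext w
    rw [(hνf w).fderiv]
    simp
    ring
  have hνI : (fun w => fderiv ℝ ν w (I:ℂ)) = fun w => 2 * w.im := by
    funext w
    rw [(hνf w).fderiv]
    simp
    ring
  have hQν1 : fderiv ℝ (fun w => fderiv ℝ ν w (1:ℂ)) = fun _ => (2:ℝ) • Complex.reCLM := by
    funext x
    rw [hν1]
    exact (Complex.reCLM.hasFDerivAt.const_mul (2:ℝ)).fderiv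
  have hQνI : fderiv ℝ (fun w => fderiv ℝ ν w (I:ℂ)) = fun _ => (2:ℝ) • Complex.imCLM := by
    funext x
    rw [hνI]
    exact (Complex.imCLM.hasFDerivAt.const_mul (2:ℝ)).fderiv
  -- main step : φ z₀ ≤ ε for every positive ε
  intro z₀ hz₀
  have key : ∀ ε : ℝ, 0 < ε → φ z₀ ≤ ε := by
    intro ε hε
    set ψ : ℂ → ℝ := fun w => φ w + ε * ν w with hψ
    have hψc : ContinuousOn ψ (closedBall (0:ℂ) 1) :=
      hc.add ((continuous_const.mul hνcd.continuous).continuousOn)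
    have hψ2 : ContDiffOn ℝ 2 ψ (ball (0:ℂ) 1) :=
      h2.add ((contDiff_const.mul hνcd).contDiffOn)
    obtain ⟨x, hx, hmax⟩ := (isCompact_closedBall (0:ℂ) 1).exists_isMaxOn
      ⟨0, mem_closedBall_self zero_le_one⟩ hψc
    by_cases hxb : x ∈ ball (0:ℂ) 1
    · exfalso
      have hloc : IsLocalMax ψ x := hmax.isLocalMax
        (Filter.mem_of_superset (isOpen_ball.mem_nhds hxb) ball_subset_closedBall)
      -- second derivative in direction e is ≤ 0
      have hQ : ∀ e : ℂ, fderiv ℝ (fun w => fderiv ℝ ψ w e) x e ≤ 0 := by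
        intro e
        set L : ℝ → ℂ := fun t => x + t • e with hL
        have hLd : ∀ t : ℝ, HasDerivAt L e t := by
          intro t
          have := ((hasDerivAt_id t).smul_const e).const_add x
          simpa [hL] using this
        have hL0 : L 0 = x := by simp [hL]
        have hLe : ∀ᶠ t in 𝓝 (0:ℝ), L t ∈ ball (0:ℂ) 1 :=
          (hLd 0).continuousAt.preimage_mem_nhds (by rw [hL0]; exact isOpen_ball.mem_nhds hxb)
        have hgg : ∀ᶠ t in 𝓝 (0:ℝ), HasDerivAt (fun s => ψ (L s)) (fderiv ℝ ψ (L t) e) t := by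
          filter_upwards [hLe] with t ht
          have hdψ : DifferentiableAt ℝ ψ (L t) :=
            (hψ2.differentiableOn (by norm_num)).differentiableAt (isOpen_ball.mem_nhds ht)
          exact hdψ.hasFDerivAt.comp_hasDerivAt t (hLd t)
        have hg'd : HasDerivAt (fun t => fderiv ℝ ψ (L t) e)
            (fderiv ℝ (fun w => fderiv ℝ ψ w e) x e) 0 := by
          have hD : DifferentiableAt ℝ (fun w => fderiv ℝ ψ w e) x :=
            diff_fderiv_apply isOpen_ball hxb hψ2 e
          rw [← hL0] at hD
          have h8 := hD.hasFDerivAt.comp_hasDerivAt 0 (hLd 0)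
          rw [hL0] at h8
          exact h8
        have hlm : IsLocalMax (fun s => ψ (L s)) 0 := by
          rw [← hL0] at hloc
          exact hloc.comp_continuous (hLd 0).continuousAt
        exact second_deriv_nonpos_at_localmax hgg hg'd hlm
      -- but the sum of the two second derivatives is 4ε > 0
      have hφd : ∀ w ∈ ball (0:ℂ) 1, DifferentiableAt ℝ φ w := fun w hw =>
        (h2.differentiableOn (by norm_num)).differentiableAt (isOpen_ball.mem_nhds hw)
      have hkey1 : (fun w => fderiv ℝ ψ w (1:ℂ))
          =ᶠ[𝓝 x] fun w => fderiv ℝ φ w 1 + ε * (2 * w.re) := by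
        filter_upwards [isOpen_ball.mem_nhds hxb] with w hw
        rw [hψ]
        rw [fderiv_fun_add (hφd w hw) ((hνf w).differentiableAt.const_mul ε),
          fderiv_const_mul (hνf w).differentiableAt ε]
        have := congrFun hν1 w
        simp only [ContinuousLinearMap.add_apply, ContinuousLinearMap.smul_apply,
          smul_eq_mul] at this ⊢
        rw [this]
      have hkeyI : (fun w => fderiv ℝ ψ w (I:ℂ))
          =ᶠ[𝓝 x] fun w => fderiv ℝ φ w I + ε * (2 * w.im) := by
        filter_upwards [isOpen_ball.mem_nhds hxb] with w hw
        rw [hψ]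
        rw [fderiv_fun_add (hφd w hw) ((hνf w).differentiableAt.const_mul ε),
          fderiv_const_mul (hνf w).differentiableAt ε]
        have := congrFun hνI w
        simp only [ContinuousLinearMap.add_apply, ContinuousLinearMap.smul_apply,
          smul_eq_mul] at this ⊢
        rw [this]
      have hA1 : DifferentiableAt ℝ (fun w => fderiv ℝ φ w (1:ℂ)) x :=
        diff_fderiv_apply isOpen_ball hxb h2 1
      have hAI : DifferentiableAt ℝ (fun w => fderiv ℝ φ w (I:ℂ)) x :=
        diff_fderiv_apply isOpen_ball hxb h2 I
      have hB1 : HasFDerivAt (fun w : ℂ => ε * (2 * w.re)) (ε • ((2:ℝ) • Complex.reCLM)) x :=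
        (Complex.reCLM.hasFDerivAt.const_mul (2:ℝ)).const_mul ε
      have hBI : HasFDerivAt (fun w : ℂ => ε * (2 * w.im)) (ε • ((2:ℝ) • Complex.imCLM)) x :=
        (Complex.imCLM.hasFDerivAt.const_mul (2:ℝ)).const_mul ε
      have hsum1 : fderiv ℝ (fun w => fderiv ℝ ψ w (1:ℂ)) x 1
          = fderiv ℝ (fun w => fderiv ℝ φ w (1:ℂ)) x 1 + 2 * ε := by
        rw [hkey1.fderiv_eq, (hA1.hasFDerivAt.fun_add hB1).fderiv]
        simp
        ring
      have hsumI : fderiv ℝ (fun w => fderiv ℝ ψ w (I:ℂ)) x I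
          = fderiv ℝ (fun w => fderiv ℝ φ w (I:ℂ)) x I + 2 * ε := by
        rw [hkeyI.fderiv_eq, (hAI.hasFDerivAt.fun_add hBI).fderiv]
        simp
        ring
      have h4ε := hlap x hxb
      have hq1 := hQ 1
      have hqI := hQ I
      rw [hsum1] at hq1
      rw [hsumI] at hqI
      linarith
    · -- x is on the boundary sphere
      have hxs : ‖x‖ = 1 := by
        rw [mem_closedBall, Complex.dist_eq, sub_zero] at hx
        rw [mem_ball, Complex.dist_eq, sub_zero] at hxb
        linarith [not_lt.1 hxb]
      have hψx : ψ x = ε := by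
        have hνx : ν x = 1 := by
          have := Complex.sq_norm x
          rw [hxs] at this
          rw [hν]
          simp only []
          rw [show x.re * x.re + x.im * x.im = Complex.normSq x from rfl]
          rw [← this]
          simp [Complex.normSq_apply]
        have hbx : φ x = 0 := hb x (by
          rw [mem_sphere_iff_norm, sub_zero]
          exact hxs)
        rw [hψ]; simp only []; rw [hbx, hνx]; ring
      have h9 : ψ z₀ ≤ ψ x := hmax hz₀
      have h10 : 0 ≤ ν z₀ := by
        rw [hν]
        simp only []
        nlinarith [sq_nonneg z₀.re, sq_nonneg z₀.im]
      rw [hψx] at h9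
      rw [hψ] at h9
      simp only [] at h9
      nlinarith
  by_contra hcon
  push_neg at hcon
  linarith [key (φ z₀ / 2) (by linarith)]

lemma harmonic_zero_boundary_eq_zero {W : ℂ → ℂ}
    (h2 : ContDiffOn ℝ 2 W (ball (0:ℂ) 1))
    (hlap : ∀ z ∈ ball (0:ℂ) 1, laplacianC W z = 0)
    (hcont : ContinuousOn W (closedBall (0:ℂ) 1))
    (hb : ∀ z ∈ sphere (0:ℂ) 1, W z = 0) :
    ∀ z ∈ closedBall (0:ℂ) 1, W z = 0 := by
  have hWd : ∀ w ∈ ball (0:ℂ) 1, DifferentiableAt ℝ W w := fun w hw =>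
    (h2.differentiableOn (by norm_num)).differentiableAt (isOpen_ball.mem_nhds hw)
  have main : ∀ p : ℂ →L[ℝ] ℝ, ∀ z ∈ closedBall (0:ℂ) 1, p (W z) ≤ 0 := by
    intro p
    apply real_max_principle
    · exact p.continuous.comp_continuousOn hcont
    · exact p.contDiff.comp_contDiffOn h2
    · intro z hz
      have key : ∀ v : ℂ, fderiv ℝ (fun w => fderiv ℝ (fun x => p (W x)) w v) z v
          = p (fderiv ℝ (fun w => fderiv ℝ W w v) z v) := by
        intro v
        have e : (fun w => fderiv ℝ (fun x => p (W x)) w v)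
            =ᶠ[𝓝 z] fun w => p (fderiv ℝ W w v) := by
          filter_upwards [isOpen_ball.mem_nhds hz] with w hw
          rw [show (fun x => p (W x)) = p ∘ W from rfl,
            (p.hasFDerivAt.comp w (hWd w hw).hasFDerivAt).fderiv]
          rfl
        rw [e.fderiv_eq]
        rw [show (fun w => p (fderiv ℝ W w v)) = p ∘ (fun w => fderiv ℝ W w v) from rfl,
          (p.hasFDerivAt.comp z (diff_fderiv_apply isOpen_ball hz h2 v).hasFDerivAt).fderiv]
        rfl
      rw [key 1, key I, ← map_add]
      have h5 := hlap z hz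
      rw [laplacianC] at h5
      rw [h5, map_zero]
    · intro z hz
      rw [hb z hz, map_zero]
  intro z hz
  have p1 := main Complex.reCLM z hz
  have p2 := main (-Complex.reCLM) z hz
  have p3 := main Complex.imCLM z hz
  have p4 := main (-Complex.imCLM) z hz
  simp only [ContinuousLinearMap.neg_apply, neg_nonpos, Complex.reCLM_apply,
    Complex.imCLM_apply] at p1 p2 p3 p4
  have : W z = Complex.mk 0 0 := by
    apply Complex.ext <;> simp <;> linarith
  exact this.trans (by apply Complex.ext <;> simp)

/-- **Theorem 4.1.**  Let `u` be a `C^∞` function on the unit circle and let `u = h + H`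
be its `h + H` decomposition: `h` is holomorphic on `𝔻` and is the Cauchy transform of
`u`, `H` is holomorphic on `ℂ ∖ 𝔻̄`, vanishes at infinity and is minus the exterior
Cauchy integral of `u`, and both extend `C^∞` smoothly to the circle from their
respective sides.  Then the solution `U` of the classical Dirichlet problem on `𝔻` with
boundary datum `u` is given by `U(z) = h(z) + H(1/z̄)` on `𝔻`, the second term being
interpreted at `z = 0` as its removable-singularity value `0`. -/
theorem dirichlet_via_hH_decomposition
    (u h H U : ℂ → ℂ)
    (hu : ContDiff ℝ (⊤ : ℕ∞) (fun t : ℝ => u (Complex.exp (t * I))))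
    -- h : interior part of the decomposition, equal to the Cauchy transform of u
    (hh_hol : DifferentiableOn ℂ h (ball (0:ℂ) 1))
    (hh_smooth : SmoothUpTo h (closure (ball (0:ℂ) 1)))
    (hh_cauchy : ∀ z ∈ ball (0:ℂ) 1, h z =
      (2 * Real.pi * I)⁻¹ *
        ∫ t in (0:ℝ)..(2 * Real.pi),
          u (Complex.exp (t * I)) / (Complex.exp (t * I) - z) * (I * Complex.exp (t * I)))
    -- H : exterior part of the decomposition
    (hH_hol : DifferentiableOn ℂ H (closure (ball (0:ℂ) 1))ᶜ)
    (hH_smooth : SmoothUpTo H ((ball (0:ℂ) 1)ᶜ))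
    (hH_vanish : Tendsto H (cocompact ℂ) (𝓝 0))
    (hH_cauchy : ∀ z ∈ (closure (ball (0:ℂ) 1))ᶜ, H z =
      -((2 * Real.pi * I)⁻¹ *
        ∫ t in (0:ℝ)..(2 * Real.pi),
          u (Complex.exp (t * I)) / (Complex.exp (t * I) - z) * (I * Complex.exp (t * I))))
    -- u = h + H on the unit circle
    (hdecomp : ∀ z ∈ sphere (0:ℂ) 1, u z = h z + H z)
    -- U : the solution of the Dirichlet problem with datum u
    (hU_harm : HarmonicOnC U (ball (0:ℂ) 1))
    (hU_cont : ContinuousOn U (closure (ball (0:ℂ) 1)))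
    (hU_bdry : ∀ z ∈ sphere (0:ℂ) 1, U z = u z) :
    (∀ z ∈ ball (0:ℂ) 1, z ≠ 0 → U z = h z + H (1 / (starRingEnd ℂ z))) ∧
    U 0 = h 0 := by
  have hcl : closure (ball (0:ℂ) 1) = closedBall (0:ℂ) 1 := closure_ball (0:ℂ) one_ne_zero
  rw [hcl] at hH_hol hh_smooth hU_cont
  -- the reflected exterior function
  set G : ℂ → ℂ := fun w =>
    if w = 0 then 0 else (starRingEnd ℂ) (H (((starRingEnd ℂ) w)⁻¹)) with hGdef
  have hopen : IsOpen (closedBall (0:ℂ) 1)ᶜ := Metric.isClosed_closedBall.isOpen_compl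
  -- membership facts
  have hmem_out : ∀ w : ℂ, w ≠ 0 → ‖w‖ < 1 →
      ((starRingEnd ℂ) w)⁻¹ ∈ (closedBall (0:ℂ) 1)ᶜ := by
    intro w hw0 hw1
    simp only [mem_compl_iff, mem_closedBall, Complex.dist_eq, sub_zero, not_le]
    rw [norm_inv, RCLike.norm_conj]
    have h0 : 0 < ‖w‖ := norm_pos_iff.2 hw0
    exact (one_lt_inv₀ h0).2 hw1
  have hmem_sph : ∀ w : ℂ, w ≠ 0 → ‖w‖ ≤ 1 →
      (((starRingEnd ℂ) w)⁻¹) ∈ (ball (0:ℂ) 1)ᶜ := by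
    intro w hw0 hw1
    simp only [mem_compl_iff, mem_ball, Complex.dist_eq, sub_zero, not_lt]
    rw [norm_inv, RCLike.norm_conj]
    have h0 : 0 < ‖w‖ := norm_pos_iff.2 hw0
    exact (one_le_inv₀ h0).2 hw1
  -- G is holomorphic on the punctured ball
  have hGpunct : DifferentiableOn ℂ G (ball (0:ℂ) 1 \ {0}) := by
    intro w hw
    have hw0 : w ≠ 0 := hw.2
    have hw1 : ‖w‖ < 1 := by
      have := hw.1; rwa [mem_ball, Complex.dist_eq, sub_zero] at this
    have hmem := hmem_out w hw0 hw1
    -- H is differentiable at (conj w)⁻¹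
    have hHd : DifferentiableAt ℂ H (((starRingEnd ℂ) w)⁻¹) :=
      hH_hol.differentiableAt (hopen.mem_nhds hmem)
    have hconjeq : (starRingEnd ℂ) (w⁻¹) = ((starRingEnd ℂ) w)⁻¹ := map_inv₀ _ _
    have hKd : DifferentiableAt ℂ
        (fun x => (starRingEnd ℂ) (H ((starRingEnd ℂ) x))) (w⁻¹) := by
      rw [← hconjeq] at hHd
      exact (hasDerivAt_conj_conj hHd.hasDerivAt).differentiableAt
    have hcomp : DifferentiableAt ℂ
        (fun x => (starRingEnd ℂ) (H ((starRingEnd ℂ) (x⁻¹)))) w :=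
      hKd.comp w (differentiableAt_inv hw0)
    have heq : G =ᶠ[𝓝 w] fun x => (starRingEnd ℂ) (H ((starRingEnd ℂ) (x⁻¹))) := by
      filter_upwards [isOpen_compl_singleton.mem_nhds (show w ∈ ({0}ᶜ : Set ℂ) from hw0)] with x hx
      rw [hGdef]
      simp only [if_neg (by exact hx : x ≠ 0)]
      rw [map_inv₀]
    exact (hcomp.congr_of_eventuallyEq heq).differentiableWithinAt
  -- G is continuous at 0
  have hGtend : Tendsto (fun w : ℂ => (starRingEnd ℂ) (H (((starRingEnd ℂ) w)⁻¹)))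
      (𝓝[≠] (0:ℂ)) (𝓝 0) := by
    have t1 : Tendsto (fun w : ℂ => ((starRingEnd ℂ) w)⁻¹) (𝓝[≠] (0:ℂ)) (cocompact ℂ) := by
      rw [← Metric.cobounded_eq_cocompact, ← tendsto_norm_atTop_iff_cobounded]
      have t2 : Tendsto (fun w : ℂ => ‖w‖) (𝓝[≠] (0:ℂ)) (𝓝[>] (0:ℝ)) := by
        rw [tendsto_nhdsWithin_iff]
        constructor
        · have := continuous_norm.tendsto (0:ℂ)
          simp only [norm_zero] at this
          exact this.mono_left nhdsWithin_le_nhds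
        · filter_upwards [self_mem_nhdsWithin] with w hw
          exact norm_pos_iff.2 hw
      have t3 : Tendsto (fun w : ℂ => ‖w‖⁻¹) (𝓝[≠] (0:ℂ)) atTop :=
        tendsto_inv_nhdsGT_zero.comp t2
      refine t3.congr fun w => ?_
      rw [norm_inv, RCLike.norm_conj]
    have t4 : Tendsto (fun w : ℂ => H (((starRingEnd ℂ) w)⁻¹)) (𝓝[≠] (0:ℂ)) (𝓝 0) :=
      hH_vanish.comp t1
    have t5 := (Complex.continuous_conj.tendsto (0:ℂ)).comp t4
    simpa [Function.comp_def] using t5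
  have hGat0 : ContinuousAt G 0 := by
    have hG0 : G 0 = 0 := by rw [hGdef]; simp
    have heq2 : (fun w : ℂ => (starRingEnd ℂ) (H (((starRingEnd ℂ) w)⁻¹)))
        =ᶠ[𝓝[≠] (0:ℂ)] G := by
      filter_upwards [self_mem_nhdsWithin] with w hw
      rw [hGdef]
      simp only [if_neg (show w ≠ 0 from hw)]
    have htend : Tendsto G (𝓝[≠] (0:ℂ) ⊔ pure 0) (𝓝 0) := by
      rw [tendsto_sup]
      refine ⟨hGtend.congr' heq2, ?_⟩
      rw [tendsto_pure_left]
      intro s hs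
      rw [hG0]
      exact mem_of_mem_nhds hs
    rw [ContinuousAt, hG0]
    rwa [nhdsNE_sup_pure] at htend
  -- G is holomorphic on the ball
  have hGd : DifferentiableOn ℂ G (ball (0:ℂ) 1) :=
    (differentiableOn_compl_singleton_and_continuousAt_iff
      (isOpen_ball.mem_nhds (mem_ball_self one_pos))).1 ⟨hGpunct, hGat0⟩
  -- continuity of G on the closed ball
  obtain ⟨gH, hgH, hgHeq⟩ := hH_smooth
  have hGcont : ContinuousOn G (closedBall (0:ℂ) 1) := by
    intro w hw
    by_cases hw0 : w = 0
    · subst hw0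
      exact hGat0.continuousWithinAt
    · have hwa : ‖w‖ ≤ 1 := by
        rwa [mem_closedBall, Complex.dist_eq, sub_zero] at hw
      have hcontg : ContinuousAt (fun x : ℂ => (starRingEnd ℂ) (gH (((starRingEnd ℂ) x)⁻¹))) w := by
        apply Complex.continuous_conj.continuousAt.comp
        apply hgH.continuous.continuousAt.comp
        exact (continuousAt_inv₀ (by simpa using hw0)).comp Complex.continuous_conj.continuousAt
      refine hcontg.continuousWithinAt.congr_of_eventuallyEq ?_ ?_
      · filter_upwards [self_mem_nhdsWithin,
          mem_nhdsWithin_of_mem_nhds (isOpen_compl_singleton.mem_nhds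
            (show w ∈ ({0}ᶜ : Set ℂ) from hw0))] with x hx hx0
        have hxa : ‖x‖ ≤ 1 := by
          rwa [mem_closedBall, Complex.dist_eq, sub_zero] at hx
        rw [hGdef]
        simp only [if_neg (show x ≠ 0 from hx0)]
        rw [hgHeq (hmem_sph x hx0 hxa)]
      · rw [hGdef]
        simp only [if_neg hw0]
        rw [hgHeq (hmem_sph w hw0 hwa)]
  -- continuity of h on the closed ball
  obtain ⟨gh, hgh, hgheq⟩ := hh_smooth
  have hhc : ContinuousOn h (closedBall (0:ℂ) 1) :=
    (hgh.continuous.continuousOn).congr hgheq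
  -- the candidate solution
  set V : ℂ → ℂ := fun z => h z + (starRingEnd ℂ) (G z) with hVdef
  have hVcont : ContinuousOn V (closedBall (0:ℂ) 1) :=
    hhc.add (Complex.continuous_conj.comp_continuousOn hGcont)
  -- boundary values of V
  have hVb : ∀ z ∈ sphere (0:ℂ) 1, V z = u z := by
    intro z hz
    have hza : ‖z‖ = 1 := by
      rwa [mem_sphere_iff_norm, sub_zero] at hz
    have hz0 : z ≠ 0 := by
      intro hcontra
      rw [hcontra] at hza
      simp at hza
    have hinv : ((starRingEnd ℂ) z)⁻¹ = z := by
      apply inv_eq_of_mul_eq_one_right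
      rw [mul_comm, Complex.mul_conj]
      rw [← Complex.sq_norm, hza]
      norm_num
    rw [hVdef]
    simp only [hGdef, if_neg hz0, hinv, Complex.conj_conj]
    exact (hdecomp z hz).symm
  -- smoothness of V on the open ball
  have hh2 : ContDiffOn ℝ 2 h (ball (0:ℂ) 1) :=
    (hh_hol.contDiffOn isOpen_ball).restrict_scalars ℝ
  have hG2 : ContDiffOn ℝ 2 G (ball (0:ℂ) 1) :=
    (hGd.contDiffOn isOpen_ball).restrict_scalars ℝ
  have hconjG2 : ContDiffOn ℝ 2 (fun w => (starRingEnd ℂ) (G w)) (ball (0:ℂ) 1) := by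
    have : ContDiff ℝ 2 (fun z : ℂ => (starRingEnd ℂ) z) :=
      Complex.conjCLE.toContinuousLinearMap.contDiff
    exact this.comp_contDiffOn hG2
  have hV2 : ContDiffOn ℝ 2 V (ball (0:ℂ) 1) := hh2.add hconjG2
  -- the difference W = U - V is harmonic with zero boundary values
  have hW2 : ContDiffOn ℝ 2 (fun z => U z - V z) (ball (0:ℂ) 1) := hU_harm.1.sub hV2
  have hWlap : ∀ z ∈ ball (0:ℂ) 1, laplacianC (fun z => U z - V z) z = 0 := by
    intro z hz
    rw [laplacianC_sub' isOpen_ball hz hU_harm.1 hV2]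
    have hVlap : laplacianC V z = 0 := by
      rw [hVdef]
      rw [laplacianC_add' isOpen_ball hz hh2 hconjG2]
      rw [laplacianC_holo_zero isOpen_ball hh_hol z hz,
        laplacianC_conj_holo_zero isOpen_ball hGd z hz]
      ring
    rw [hU_harm.2 z hz, hVlap]
    ring
  have hWcont : ContinuousOn (fun z => U z - V z) (closedBall (0:ℂ) 1) := hU_cont.sub hVcont
  have hWb : ∀ z ∈ sphere (0:ℂ) 1, U z - V z = 0 := by
    intro z hz
    rw [hU_bdry z hz, hVb z hz, sub_self]
  have hUV : ∀ z ∈ closedBall (0:ℂ) 1, U z = V z := by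
    intro z hz
    have h12 := harmonic_zero_boundary_eq_zero hW2 hWlap hWcont hWb z hz
    exact sub_eq_zero.1 h12
  constructor
  · intro z hz hz0
    have hUVz := hUV z (ball_subset_closedBall hz)
    rw [hUVz, hVdef]
    simp only [hGdef, if_neg hz0, Complex.conj_conj]
    rw [one_div]
  · have hUV0 := hUV 0 (mem_closedBall_self zero_le_one)
    rw [hUV0, hVdef]
    simp [hGdef]
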